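/- Let R be a commutative noetherian ring and M a finitely generated R-module. Then an element a ∈ R lies in the stable annihilator of M if and only if a annihilates Ext^i_R(M, N) for all i > 0 and all finitely generated R-modules N. -/

import Mathlib

open IsLocalRing

/-- a lies in the stable annihilator of M: multiplication by a on M factors
through a finitely generated projective R-module. -/
def StablyAnn (R : Type) [CommRing R] (M : Type) [AddCommGroup M] [Module R M] (a : R) : Prop :=
  ∃ (P : Type) (_ : AddCommGroup P) (_ : Module R P),
    Module.Finite R P ∧ Module.Projective R P ∧
    ∃ (f : M →ₗ[R] P) (g : P →ₗ[R] M), g ∘ₗ f = a • (LinearMap.id : M →ₗ[R] M)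

/-- The Ext module of two module-category objects. -/
noncomputable def ExtMod (R : Type) [CommRing R] (n : ℕ) (M N : ModuleCat.{0} R) : ModuleCat R :=
  ((Ext R (ModuleCat.{0} R) n).obj (Opposite.op M)).obj N

/-- K is an n-th syzygy of M: there is an exact sequence
0 → K → F_{n-1} → ... → F_0 → M → 0 with finitely generated free modules F_i. -/
def IsSyzygyCat (R : Type) [CommRing R] : ℕ → ModuleCat.{0} R → ModuleCat.{0} R → Prop
  | 0, K, M => Nonempty (K ≃ₗ[R] M)
  | n + 1, K, M =>
      ∃ (s : ℕ) (p : (Fin s → R) →ₗ[R] M), Function.Surjective p ∧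
        IsSyzygyCat R n K (ModuleCat.of R (LinearMap.ker p))

/-- M is a direct summand of Z. -/
def IsSummand (R : Type) [CommRing R] (M Z : ModuleCat.{0} R) : Prop :=
  ∃ (i : M →ₗ[R] Z) (p : Z →ₗ[R] M), p ∘ₗ i = LinearMap.id

/-- The class |X|_n of modules built from X by n-1 extensions together with
finite direct sums and direct summands. -/
def Ball (R : Type) [CommRing R] (X : ModuleCat.{0} R) : ℕ → ModuleCat.{0} R → Prop
  | 0, M => Subsingleton M
  | 1, M => ∃ s : ℕ, IsSummand R M (ModuleCat.of R (Fin s → X))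
  | (n + 2), M =>
      ∃ (A Z B : ModuleCat.{0} R) (f : A →ₗ[R] Z) (g : Z →ₗ[R] B),
        Function.Injective f ∧ Function.Surjective g ∧ LinearMap.range f = LinearMap.ker g ∧
        Ball R X (n + 1) A ∧ Ball R X 1 B ∧ IsSummand R M Z

section StAuxSec

open CategoryTheory Limits

namespace StAux

variable {R : Type} [CommRing R] {M : ModuleCat.{0} R} (P : ProjectiveResolution M)

/-- differential of the resolution, as a linear map -/
def dL (n : ℕ) : P.complex.X (n+1) →ₗ[R] P.complex.X n := (P.complex.d (n+1) n).hom

lemma projX (n : ℕ) : Module.Projective R (P.complex.X n) :=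
  by haveI := P.projective n; exact ModuleCat.projective_of_module_projective _

/-- augmentation of the resolution, as a linear map -/
noncomputable def εL : P.complex.X 0 →ₗ[R] M := (P.π.f 0).hom

lemma ε_surj : Function.Surjective (εL P) := by
  have h : Epi (P.π.f 0) := inferInstance
  rw [ModuleCat.epi_iff_surjective] at h; exact h

lemma εd : (εL P) ∘ₗ (dL P 0) = 0 := congrArg ModuleCat.Hom.hom P.complex_d_comp_π_f_zero

lemma ker_ε : LinearMap.ker (εL P) = LinearMap.range (dL P 0) :=
  (P.exact₀.moduleCat_range_eq_ker).symm

lemma ker_d (n : ℕ) : LinearMap.ker (dL P n) = LinearMap.range (dL P (n+1)) :=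
  ((P.exact_succ n).moduleCat_range_eq_ker).symm

lemma dd (n : ℕ) : (dL P n) ∘ₗ (dL P (n+1)) = 0 := congrArg ModuleCat.Hom.hom (P.complex.d_comp_d (n+2) (n+1) n)

/-- lifting through a surjection-onto-range using projectivity -/
lemma exists_lift {A B C : Type} [AddCommGroup A] [AddCommGroup B] [AddCommGroup C]
    [Module R A] [Module R B] [Module R C] (hA : Module.Projective R A)
    (θ : A →ₗ[R] B) (dm : C →ₗ[R] B) (h : ∀ x, θ x ∈ LinearMap.range dm) :
    ∃ l : A →ₗ[R] C, dm ∘ₗ l = θ := by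
  obtain ⟨l, hl⟩ := Module.projective_lifting_property dm.rangeRestrict
    (θ.codRestrict (LinearMap.range dm) h) (LinearMap.surjective_rangeRestrict dm)
  exact ⟨l, by ext x; exact congrArg Subtype.val (LinearMap.congr_fun hl x)⟩

lemma mem0 (a : R) (γ0 : P.complex.X 0 →ₗ[R] P.complex.X 0)
    (hπγ : (εL P) ∘ₗ γ0 = a • (εL P)) (x : P.complex.X 0) :
    ((a • LinearMap.id : P.complex.X 0 →ₗ[R] P.complex.X 0) - γ0) x
      ∈ LinearMap.range (dL P 0) := by
  rw [← ker_ε, LinearMap.mem_ker]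
  have h := LinearMap.congr_fun hπγ x
  simp only [LinearMap.comp_apply, LinearMap.smul_apply] at h
  simp only [LinearMap.sub_apply, LinearMap.smul_apply, LinearMap.id_apply, map_sub,
    map_smul, h, sub_self]

lemma memsucc (a : R) (n : ℕ) (hn : P.complex.X n →ₗ[R] P.complex.X (n+1))
    (rn : P.complex.X n →ₗ[R] P.complex.X n)
    (h1 : (dL P n) ∘ₗ hn = a • LinearMap.id - rn) (h2 : rn ∘ₗ (dL P n) = 0)
    (x : P.complex.X (n+1)) :
    ((a • LinearMap.id : P.complex.X (n+1) →ₗ[R] P.complex.X (n+1)) - hn ∘ₗ (dL P n)) x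
      ∈ LinearMap.range (dL P (n+1)) := by
  rw [← ker_d, LinearMap.mem_ker]
  have h1' := LinearMap.congr_fun h1 ((dL P n) x)
  have h2' := LinearMap.congr_fun h2 x
  simp only [LinearMap.comp_apply, LinearMap.sub_apply, LinearMap.smul_apply,
    LinearMap.id_apply, LinearMap.zero_apply] at h1' h2'
  simp only [LinearMap.sub_apply, LinearMap.smul_apply, LinearMap.id_apply, map_sub,
    map_smul, LinearMap.comp_apply, h1', h2', sub_zero, sub_self]

section Homotopy

variable (a : R) (γ0 : P.complex.X 0 →ₗ[R] P.complex.X 0)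
  (hπγ : (εL P) ∘ₗ γ0 = a • (εL P)) (hγd : γ0 ∘ₗ (dL P 0) = 0)

/-- homotopy data: `h n : X n → X (n+1)` and remainder `r n` with
`d ∘ h n = a • id - r n` and `r n ∘ d = 0`. -/
noncomputable def seq : ∀ n : ℕ,
    { hr : (P.complex.X n →ₗ[R] P.complex.X (n+1)) × (P.complex.X n →ₗ[R] P.complex.X n) //
      (dL P n) ∘ₗ hr.1 = a • LinearMap.id - hr.2 ∧ hr.2 ∘ₗ (dL P n) = 0 }
  | 0 =>
      ⟨⟨(exists_lift (projX P 0) _ (dL P 0) (mem0 P a γ0 hπγ)).choose, γ0⟩,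
        (exists_lift (projX P 0) _ (dL P 0) (mem0 P a γ0 hπγ)).choose_spec, hγd⟩
  | (n + 1) =>
      ⟨⟨(exists_lift (projX P (n+1)) _ (dL P (n+1))
            (memsucc P a n (seq n).1.1 (seq n).1.2 (seq n).2.1 (seq n).2.2)).choose,
          (seq n).1.1 ∘ₗ (dL P n)⟩,
        (exists_lift (projX P (n+1)) _ (dL P (n+1))
            (memsucc P a n (seq n).1.1 (seq n).1.2 (seq n).2.1 (seq n).2.2)).choose_spec,
        by rw [LinearMap.comp_assoc, dd, LinearMap.comp_zero]⟩

lemma seq_r_succ (n : ℕ) :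
    ((seq P a γ0 hπγ hγd (n+1)).1).2 = ((seq P a γ0 hπγ hγd n).1).1 ∘ₗ (dL P n) := by
  rw [seq]

lemma forward_key (n : ℕ) {N : Type} [AddCommGroup N] [Module R N]
    (c : P.complex.X (n+1) →ₗ[R] N) (hc : c ∘ₗ (dL P (n+1)) = 0) :
    a • c = (c ∘ₗ ((seq P a γ0 hπγ hγd n).1).1) ∘ₗ (dL P n) := by
  have h1 := (seq P a γ0 hπγ hγd (n+1)).2.1
  rw [seq_r_succ] at h1
  ext x
  have hcx := congrArg c (LinearMap.congr_fun h1 x)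
  have hc' := LinearMap.congr_fun hc ((seq P a γ0 hπγ hγd (n+1)).1.1 x)
  simp only [LinearMap.comp_apply, LinearMap.sub_apply, LinearMap.smul_apply,
    LinearMap.id_apply, LinearMap.zero_apply, map_sub, map_smul] at hcx hc' ⊢
  rw [hc'] at hcx
  exact sub_eq_zero.mp hcx.symm

end Homotopy

/-- `Ext^{n+1}(M, N)` identified with the concrete homology of the Hom complex. -/
noncomputable def extEquiv (N : ModuleCat.{0} R) (n : ℕ) :
    ((((Ext R (ModuleCat.{0} R) (n+1)).obj (Opposite.op M)).obj N) : Type) ≃ₗ[R]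
      (LinearMap.ker ((P.complex.linearYonedaObj R N).sc' n (n+1) (n+2)).g.hom ⧸
        LinearMap.range ((P.complex.linearYonedaObj R N).sc' n (n+1) (n+2)).moduleCatToCycles) :=
  (P.isoExt (n+1) N ≪≫
    (P.complex.linearYonedaObj R N).homologyIsoSc' n (n+1) (n+2) (by simp)
      (by simp [CochainComplex.next]) ≪≫
    ((P.complex.linearYonedaObj R N).sc' n (n+1) (n+2)).moduleCatHomologyIso).toLinearEquiv

include P in
/-- Forward direction: a stable annihilator element kills all positive Ext. -/
lemma forward_ext (a : R) (Q : Type) [AddCommGroup Q] [Module R Q]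
    (hproj : Module.Projective R Q) (f : ↑M →ₗ[R] Q) (g : Q →ₗ[R] ↑M)
    (hfg : g ∘ₗ f = a • (LinearMap.id : ↑M →ₗ[R] ↑M)) (n : ℕ) (N : ModuleCat.{0} R)
    (x : (((Ext R (ModuleCat.{0} R) (n+1)).obj (Opposite.op M)).obj N)) : a • x = 0 := by
  obtain ⟨g0, hg0⟩ := Module.projective_lifting_property (εL P) g (ε_surj P)
  have hπγ : (εL P) ∘ₗ (g0 ∘ₗ f ∘ₗ εL P) = a • (εL P) := by
    ext y
    have h1 := LinearMap.congr_fun hg0 (f ((εL P) y))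
    have h2 := LinearMap.congr_fun hfg ((εL P) y)
    simp only [LinearMap.comp_apply, LinearMap.smul_apply, LinearMap.id_apply] at h1 h2 ⊢
    rw [h1, h2]
  have hγd : (g0 ∘ₗ f ∘ₗ εL P) ∘ₗ dL P 0 = 0 := by
    ext y
    have h := LinearMap.congr_fun (εd P) y
    simp only [LinearMap.comp_apply, LinearMap.zero_apply] at h ⊢
    rw [h, map_zero, map_zero]
  apply (extEquiv P N n).injective
  rw [map_smul, map_zero]
  obtain ⟨⟨c, hc⟩, hcx⟩ := Submodule.Quotient.mk_surjective _ (extEquiv P N n x)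
  rw [← hcx, ← Submodule.Quotient.mk_smul, Submodule.Quotient.mk_eq_zero]
  have hc' : c.hom ∘ₗ (dL P (n+1)) = 0 := congrArg ModuleCat.Hom.hom hc
  refine ⟨ModuleCat.ofHom (c.hom ∘ₗ ((seq P a (g0 ∘ₗ f ∘ₗ εL P) hπγ hγd n).1).1), ?_⟩
  apply Subtype.ext
  apply ModuleCat.hom_ext
  exact (forward_key P a _ hπγ hγd n c.hom hc').symm

include P in
/-- Backward direction: if `a` kills `Ext^1(M, K)` for the first syzygy `K`,
then multiplication by `a` factors through the free cover. -/
lemma backward_ext (a : R) (s : ℕ) (p : (Fin s → R) →ₗ[R] ↑M) (hp : Function.Surjective p)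
    (hann : ∀ x : (((Ext R (ModuleCat.{0} R) 1).obj (Opposite.op M)).obj
        (ModuleCat.of R (LinearMap.ker p))), a • x = 0) :
    ∃ ψ : ↑M →ₗ[R] (Fin s → R), p ∘ₗ ψ = a • (LinearMap.id : ↑M →ₗ[R] ↑M) := by
  set K := LinearMap.ker p with hK
  set N : ModuleCat.{0} R := ModuleCat.of R K with hN
  haveI : Module.Projective R (P.complex.X 0) := projX P 0
  obtain ⟨lam, hlam⟩ := Module.projective_lifting_property p (εL P) hp
  have hmem : ∀ x, (lam ∘ₗ dL P 0) x ∈ K := by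
    intro x
    rw [hK, LinearMap.mem_ker]
    have h1 := LinearMap.congr_fun hlam ((dL P 0) x)
    have h2 := LinearMap.congr_fun (εd P) x
    simp only [LinearMap.comp_apply, LinearMap.zero_apply] at h1 h2 ⊢
    rw [h1, h2]
  set μ : P.complex.X 1 →ₗ[R] K := LinearMap.codRestrict K (lam ∘ₗ dL P 0) hmem with hμ
  have hcocycle : (μ : P.complex.X 1 →ₗ[R] ↑N) ∘ₗ dL P 1 = 0 := by
    refine LinearMap.ext fun x => Subtype.ext ?_
    have h := LinearMap.congr_fun (dd P 0) x
    simp only [LinearMap.comp_apply, LinearMap.zero_apply] at h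
    simp only [hμ, LinearMap.comp_apply, LinearMap.zero_apply, LinearMap.codRestrict_apply,
      ZeroMemClass.coe_zero, h, map_zero]
  have hcocycle' : (ModuleCat.ofHom μ : P.complex.X 1 ⟶ N) ∈ LinearMap.ker ((P.complex.linearYonedaObj R N).sc' 0 1 2).g.hom :=
    ModuleCat.hom_ext hcocycle
  have h0 : a • (Submodule.Quotient.mk ⟨(ModuleCat.ofHom μ : P.complex.X 1 ⟶ N), hcocycle'⟩ :
      (LinearMap.ker ((P.complex.linearYonedaObj R N).sc' 0 1 2).g.hom ⧸
        LinearMap.range ((P.complex.linearYonedaObj R N).sc' 0 1 2).moduleCatToCycles)) = 0 := by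
    have h1 := hann ((extEquiv P N 0).symm (Submodule.Quotient.mk ⟨(ModuleCat.ofHom μ : P.complex.X 1 ⟶ N), hcocycle'⟩))
    have h2 := congrArg (extEquiv P N 0) h1
    rwa [map_smul, LinearEquiv.apply_symm_apply, map_zero] at h2
  rw [← Submodule.Quotient.mk_smul, Submodule.Quotient.mk_eq_zero] at h0
  obtain ⟨b, hb⟩ := h0
  let b' : P.complex.X 0 →ₗ[R] K := b.hom
  have hbv : b' ∘ₗ dL P 0 = a • μ := congrArg ModuleCat.Hom.hom (congrArg Subtype.val hb)
  set θ : P.complex.X 0 →ₗ[R] (Fin s → R) := a • lam - K.subtype ∘ₗ b' with hθ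
  have hθd : θ ∘ₗ dL P 0 = 0 := by
    ext x
    have h1 := LinearMap.congr_fun hbv x
    have h2 : ((b' ((dL P 0) x)) : Fin s → R) = a • lam ((dL P 0) x) := by
      rw [LinearMap.comp_apply] at h1
      rw [h1]
      rfl
    simp only [hθ, LinearMap.comp_apply, LinearMap.sub_apply, LinearMap.smul_apply,
      LinearMap.zero_apply, Submodule.coe_subtype, h2, sub_self]
  have hker : LinearMap.ker (εL P) ≤ LinearMap.ker θ := by
    rw [ker_ε]
    rintro _ ⟨x, rfl⟩
    exact LinearMap.mem_ker.mpr (LinearMap.congr_fun hθd x)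
  set ψ : ↑M →ₗ[R] (Fin s → R) :=
    ((LinearMap.ker (εL P)).liftQ θ hker) ∘ₗ
      ((εL P).quotKerEquivOfSurjective (ε_surj P)).symm.toLinearMap with hψ
  have hψε : ∀ x, ψ ((εL P) x) = θ x := by
    intro x
    have hsymm : ((εL P).quotKerEquivOfSurjective (ε_surj P)).symm ((εL P) x)
        = Submodule.Quotient.mk x := by
      rw [LinearEquiv.symm_apply_eq]
      simp [LinearMap.quotKerEquivOfSurjective, LinearMap.quotKerEquivRange_apply_mk]
    simp [hψ, hsymm, Submodule.liftQ_apply]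
  refine ⟨ψ, ?_⟩
  ext m
  obtain ⟨x, rfl⟩ := ε_surj P m
  show p (ψ ((εL P) x)) = (a • (LinearMap.id : ↑M →ₗ[R] ↑M)) ((εL P) x)
  rw [hψε x]
  have hpl := LinearMap.congr_fun hlam x
  simp only [LinearMap.comp_apply] at hpl
  have hbk : p ((b' x : Fin s → R)) = 0 := (b' x).2
  simp only [hθ, LinearMap.sub_apply, LinearMap.smul_apply, LinearMap.comp_apply,
    Submodule.coe_subtype, map_sub, map_smul, hpl, hbk, sub_zero, LinearMap.id_apply]

end StAux

end StAuxSec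

/-- a lies in the stable annihilator of M iff a annihilates Ext^i(M,N) for all i > 0
and all finitely generated N. -/
theorem stablyAnn_iff_ann_ext (R : Type) [CommRing R] [IsNoetherianRing R]
    (M : ModuleCat.{0} R) (hM : Module.Finite R M) (a : R) :
    StablyAnn R M a ↔
      ∀ i > 0, ∀ N : ModuleCat.{0} R, Module.Finite R N →
        ∀ x : ExtMod R i M N, a • x = 0 := by
  obtain ⟨P⟩ := (CategoryTheory.HasProjectiveResolution.out (Z := M))
  constructor
  · rintro ⟨Q, iQ1, iQ2, hfin, hproj, f, g, hfg⟩ i hi N _ x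
    obtain ⟨n, rfl⟩ : ∃ n, i = n + 1 := ⟨i - 1, (Nat.succ_pred_eq_of_pos hi).symm⟩
    exact StAux.forward_ext P a Q hproj f g hfg n N x
  · intro hann
    haveI : Module.Finite R M := hM
    obtain ⟨s, p, hp⟩ := Module.Finite.exists_fin' R M
    haveI hKfin : Module.Finite R (LinearMap.ker p) := by
      haveI : IsNoetherian R (Fin s → R) := inferInstance
      exact Module.Finite.iff_fg.mpr (IsNoetherian.noetherian _)
    obtain ⟨ψ, hψ⟩ := StAux.backward_ext P a s p hp
      (hann 1 one_pos (ModuleCat.of R (LinearMap.ker p)) hKfin)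
    exact ⟨Fin s → R, inferInstance, inferInstance, inferInstance,
      Module.Projective.of_basis (Pi.basisFun R (Fin s)), ψ, p, hψ⟩
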